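/- For every sequence of real numbers (aₙ) with aₙ → ∞ and every γ > 0, there exists a sequence of positive integers (rₙ) such that limsup_{n→∞} 2^{n+1} aₙ / (2r₀ + 2²r₀r₁ + … + 2ⁿ r₀⋯r_{n-1}) = γ. -/

import Mathlib

open Filter

noncomputable def cc (a : ℕ → ℝ) (m x : ℕ) : ℝ :=
  a x * 2^(x-m) / (2^(x-m) - 1)

theorem cc_ge_self (a : ℕ → ℝ) {m x : ℕ} (h : m < x) (hx : 0 ≤ a x) : a x ≤ cc a m x := by
  have h2 : (2:ℝ)^1 ≤ 2^(x-m) := by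
    apply pow_le_pow_right₀ (by norm_num); omega
  simp only [pow_one] at h2
  rw [cc, le_div_iff₀ (by linarith)]
  nlinarith

theorem cc_mul (a : ℕ → ℝ) {m x : ℕ} (h : m < x) :
    cc a m x * (2^(x-m) - 1) = a x * 2^(x-m) := by
  have h2 : (2:ℝ)^1 ≤ 2^(x-m) := by
    apply pow_le_pow_right₀ (by norm_num); omega
  simp only [pow_one] at h2
  rw [cc, div_mul_cancel₀]
  intro h0; rw [sub_eq_zero] at h0; rw [h0] at h2; norm_num at h2

theorem exlem (a : ℕ → ℝ) (ha : Tendsto a atTop atTop) (γ : ℝ) (hγ : 0 < γ)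
    (m k P : ℕ) :
    ∃ n', m + k < n' ∧ ((k:ℝ)+1) * γ * (P+1) ≤ a n' ∧
      ∀ n, m < n → n ≤ n' → cc a m n ≤ cc a m n' := by
  set B : ℝ := max (2*(((k:ℝ)+1) * γ * (P+1))) (1 + ∑ n ∈ Finset.Ioc m (m+k), |cc a m n|) with hB
  obtain ⟨N, hN1, hN2⟩ := ((ha.eventually_ge_atTop B).and (eventually_gt_atTop (m+k))).exists
  have hmN : m < N := lt_of_le_of_lt (Nat.le_add_right m k) hN2
  have hne : (Finset.Ioc m N).Nonempty := ⟨N, by simp [hmN]⟩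
  obtain ⟨n', hn'mem, hn'max⟩ := Finset.exists_max_image (Finset.Ioc m N) (cc a m) hne
  rw [Finset.mem_Ioc] at hn'mem
  have hBpos : 0 < B := lt_of_lt_of_le (by positivity) (le_max_left _ _)
  have hccN : a N ≤ cc a m N := cc_ge_self a hmN (le_trans hBpos.le hN1)
  have hcc' : B ≤ cc a m n' := le_trans hN1 (le_trans hccN (hn'max N (by simp [hmN])))
  have hgap : m + k < n' := by
    by_contra h
    push_neg at h
    have hmem : n' ∈ Finset.Ioc m (m+k) := Finset.mem_Ioc.2 ⟨hn'mem.1, h⟩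
    have h1 : cc a m n' ≤ ∑ n ∈ Finset.Ioc m (m+k), |cc a m n| := by
      calc cc a m n' ≤ |cc a m n'| := le_abs_self _
        _ ≤ _ := Finset.single_le_sum (f := fun n => |cc a m n|) (fun i _ => abs_nonneg _) hmem
    have h2 : B ≥ 1 + ∑ n ∈ Finset.Ioc m (m+k), |cc a m n| := le_max_right _ _
    linarith
  refine ⟨n', hgap, ?_, fun n hn1 hn2 => hn'max n (Finset.mem_Ioc.2 ⟨hn1, le_trans hn2 hn'mem.2⟩)⟩
  have hmn' : m < n' := by omega
  have hpow : (0:ℝ) < 2^(n'-m) := pow_pos (by norm_num) _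
  have h2 : (2:ℝ)^1 ≤ 2^(n'-m) := by
    apply pow_le_pow_right₀ (by norm_num); omega
  simp only [pow_one] at h2
  have hcpos : 0 < cc a m n' := lt_of_lt_of_le hBpos hcc'
  have key := cc_mul a hmn'
  have h2B : 2*(((k:ℝ)+1) * γ * (P+1)) ≤ B := le_max_left _ _
  have hhalf : cc a m n' / 2 ≤ a n' := by
    rw [div_le_iff₀ (by norm_num : (0:ℝ) < 2)]
    nlinarith
  linarith [le_trans h2B hcc']

noncomputable def Tval (a : ℕ → ℝ) (γ : ℝ) (m n' : ℕ) : ℝ :=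
  cc a m n' * 2^(n'+1) / γ

noncomputable def Rval (a : ℕ → ℝ) (γ : ℝ) (m n' P : ℕ) (S : ℝ) : ℕ :=
  ⌈(Tval a γ m n' - S) / ((P:ℝ) * (2^(n'+1) - 2^(m+1)))⌉₊

noncomputable def st (a : ℕ → ℝ) (ha : Tendsto a atTop atTop) (γ : ℝ) (hγ : 0 < γ) :
    ℕ → ℕ × ℝ × ℕ
  | 0 => (1, 2, 1)
  | (k+1) =>
    let p := st a ha γ hγ k
    let n' := Classical.choose (exlem a ha γ hγ p.1 k p.2.2)
    let R := Rval a γ p.1 n' p.2.2 p.2.1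
    (n', p.2.1 + (R:ℝ) * p.2.2 * (2^(n'+1) - 2^(p.1+1)), p.2.2 * R)

noncomputable def mk' (a : ℕ → ℝ) (ha : Tendsto a atTop atTop) (γ : ℝ) (hγ : 0 < γ)
    (k : ℕ) : ℕ := (st a ha γ hγ k).1
noncomputable def Sk (a : ℕ → ℝ) (ha : Tendsto a atTop atTop) (γ : ℝ) (hγ : 0 < γ)
    (k : ℕ) : ℝ := (st a ha γ hγ k).2.1
noncomputable def Pk (a : ℕ → ℝ) (ha : Tendsto a atTop atTop) (γ : ℝ) (hγ : 0 < γ)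
    (k : ℕ) : ℕ := (st a ha γ hγ k).2.2
noncomputable def nk (a : ℕ → ℝ) (ha : Tendsto a atTop atTop) (γ : ℝ) (hγ : 0 < γ)
    (k : ℕ) : ℕ :=
  Classical.choose (exlem a ha γ hγ (mk' a ha γ hγ k) k (Pk a ha γ hγ k))
noncomputable def Rk (a : ℕ → ℝ) (ha : Tendsto a atTop atTop) (γ : ℝ) (hγ : 0 < γ)
    (k : ℕ) : ℕ :=
  Rval a γ (mk' a ha γ hγ k) (nk a ha γ hγ k) (Pk a ha γ hγ k) (Sk a ha γ hγ k)

open Classical in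
noncomputable def rr (a : ℕ → ℝ) (ha : Tendsto a atTop atTop) (γ : ℝ) (hγ : 0 < γ)
    (n : ℕ) : ℕ :=
  if h : ∃ k, mk' a ha γ hγ k = n then Rk a ha γ hγ (Classical.choose h) else 1

section
variable (a : ℕ → ℝ) (ha : Tendsto a atTop atTop) (γ : ℝ) (hγ : 0 < γ)

theorem mk_zero : mk' a ha γ hγ 0 = 1 := rfl
theorem Sk_zero : Sk a ha γ hγ 0 = 2 := rfl
theorem Pk_zero : Pk a ha γ hγ 0 = 1 := rfl
theorem mk_succ (k : ℕ) : mk' a ha γ hγ (k+1) = nk a ha γ hγ k := rfl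
theorem Sk_succ (k : ℕ) : Sk a ha γ hγ (k+1)
    = Sk a ha γ hγ k + (Rk a ha γ hγ k : ℝ) * (Pk a ha γ hγ k) *
      (2^(nk a ha γ hγ k + 1) - 2^(mk' a ha γ hγ k + 1)) := rfl
theorem Pk_succ (k : ℕ) : Pk a ha γ hγ (k+1) = Pk a ha γ hγ k * Rk a ha γ hγ k := rfl

theorem nk_spec (k : ℕ) :
    mk' a ha γ hγ k + k < nk a ha γ hγ k ∧
    ((k:ℝ)+1) * γ * (Pk a ha γ hγ k + 1) ≤ a (nk a ha γ hγ k) ∧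
    ∀ n, mk' a ha γ hγ k < n → n ≤ nk a ha γ hγ k →
      cc a (mk' a ha γ hγ k) n ≤ cc a (mk' a ha γ hγ k) (nk a ha γ hγ k) :=
  Classical.choose_spec (exlem a ha γ hγ (mk' a ha γ hγ k) k (Pk a ha γ hγ k))

end

set_option maxHeartbeats 2000000 in
theorem exists_r_limsup_eq (a : ℕ → ℝ)
    (ha : Filter.Tendsto a Filter.atTop Filter.atTop)
    (γ : ℝ) (hγ : 0 < γ) :
    ∃ r : ℕ → ℕ, (∀ n, 0 < r n) ∧
      Filter.limsup
        (fun n : ℕ =>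
          (((2:ℝ)^(n+1) * a n /
            ∑ j ∈ Finset.range n,
              (2:ℝ)^(j+1) * ∏ i ∈ Finset.range (j+1), (r i : ℝ) : ℝ) : EReal))
        Filter.atTop = (γ : EReal) := by
  classical
  set m := mk' a ha γ hγ with hm
  set S := Sk a ha γ hγ with hS
  set P := Pk a ha γ hγ with hP
  set N := nk a ha γ hγ with hN
  set R := Rk a ha γ hγ with hR
  set r := rr a ha γ hγ with hr
  set Tv : ℕ → ℝ := fun k => Tval a γ (m k) (N k) with hTv
  set K : ℕ → ℝ := fun k => (P k : ℝ) * (2^(N k+1) - 2^(m k+1)) with hK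
  -- spec
  have hspec : ∀ k, m k + k < N k ∧ ((k:ℝ)+1) * γ * (P k + 1) ≤ a (N k) ∧
      ∀ n, m k < n → n ≤ N k → cc a (m k) n ≤ cc a (m k) (N k) := nk_spec a ha γ hγ
  have hmN : ∀ k, m k < N k := fun k => by have := (hspec k).1; omega
  have hRceil : ∀ k, R k = ⌈(Tv k - S k) / K k⌉₊ := fun k => rfl
  -- round facts from invariant
  have hfact : ∀ k, 1 ≤ P k → 0 < S k → S k ≤ 2^(m k + 1) * (P k : ℝ) →
      0 < K k ∧ S k + K k ≤ Tv k ∧ 1 ≤ R k := by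
    intro k h1 h2 h3
    have hmn := hmN k
    have hPpos : (0:ℝ) < (P k : ℝ) := by exact_mod_cast h1
    have hpm : (0:ℝ) < 2^(m k + 1) := by positivity
    have hpN : (0:ℝ) < 2^(N k + 1) := by positivity
    have hpmN : (2:ℝ)^(m k + 1) * 2 ≤ 2^(N k + 1) := by
      have : (2:ℝ)^(m k + 1) * 2 = 2^(m k + 2) := by ring
      rw [this]
      apply pow_le_pow_right₀ (by norm_num)
      omega
    have hKpos : 0 < K k := by
      rw [hK]
      have : (0:ℝ) < 2^(N k+1) - 2^(m k+1) := by nlinarith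
      positivity
    have haN : ((k:ℝ)+1) * γ * (P k + 1) ≤ a (N k) := (hspec k).2.1
    have haNpos : 0 < a (N k) := lt_of_lt_of_le (by positivity) haN
    have hccN : a (N k) ≤ cc a (m k) (N k) := cc_ge_self a hmn haNpos.le
    have hTvge : ((P k:ℝ)+1) * 2^(N k+1) ≤ Tv k := by
      rw [hTv]
      simp only [Tval]
      rw [le_div_iff₀ hγ]
      have hk0 : (1:ℝ) ≤ (k:ℝ)+1 := by have : (0:ℝ) ≤ (k:ℝ) := Nat.cast_nonneg k; linarith
      have h5 : γ*((P k:ℝ)+1) ≤ cc a (m k) (N k) := by nlinarith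
      nlinarith [mul_le_mul_of_nonneg_right h5 hpN.le]
    have hSKT : S k + K k ≤ Tv k := by
      have hKeq : K k = (P k:ℝ) * 2^(N k+1) - (P k:ℝ) * 2^(m k+1) := by
        rw [hK]; ring
      nlinarith
    refine ⟨hKpos, hSKT, ?_⟩
    rw [hRceil, Nat.one_le_ceil_iff]
    apply div_pos _ hKpos
    linarith
  -- invariants
  have hinv : ∀ k, 1 ≤ P k ∧ 0 < S k ∧ S k ≤ 2^(m k + 1) * (P k : ℝ) := by
    intro k
    induction k with
    | zero =>
      refine ⟨le_refl _, ?_, ?_⟩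
      · show (0:ℝ) < Sk a ha γ hγ 0
        rw [Sk_zero]; norm_num
      · show Sk a ha γ hγ 0 ≤ 2^(mk' a ha γ hγ 0 + 1) * (Pk a ha γ hγ 0 : ℝ)
        rw [Sk_zero, mk_zero, Pk_zero]; norm_num
    | succ k ih =>
      obtain ⟨h1, h2, h3⟩ := ih
      obtain ⟨hKpos, hSKT, hR1⟩ := hfact k h1 h2 h3
      have hPpos : (0:ℝ) < (P k : ℝ) := by exact_mod_cast h1
      have hRpos : (1:ℝ) ≤ (R k : ℝ) := by exact_mod_cast hR1
      have hSs : S (k+1) = S k + (R k:ℝ)*(P k)*(2^(N k+1) - 2^(m k+1)) :=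
        Sk_succ a ha γ hγ k
      have hPs : P (k+1) = P k * R k := Pk_succ a ha γ hγ k
      have hms : m (k+1) = N k := mk_succ a ha γ hγ k
      have hpm : (0:ℝ) < 2^(m k + 1) := by positivity
      have hpmN : (2:ℝ)^(m k + 1) * 2 ≤ 2^(N k + 1) := by
        have he : (2:ℝ)^(m k + 1) * 2 = 2^(m k + 2) := by ring
        rw [he]
        apply pow_le_pow_right₀ (by norm_num)
        have := hmN k; omega
      have hpos2 : (0:ℝ) < 2^(N k+1) - 2^(m k+1) := by nlinarith
      have hprodpos : (0:ℝ) < (R k:ℝ)*(P k)*(2^(N k+1) - 2^(m k+1)) :=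
        mul_pos (mul_pos (by linarith) hPpos) hpos2
      refine ⟨?_, ?_, ?_⟩
      · rw [hPs]; exact Nat.one_le_iff_ne_zero.2 (Nat.mul_ne_zero (by omega) (by omega))
      · rw [hSs]; linarith
      · rw [hSs, hPs, hms]
        push_cast
        have h6 : S k ≤ 2^(m k+1)*(P k:ℝ)*(R k:ℝ) := by nlinarith
        nlinarith
  have hKpos : ∀ k, 0 < K k := fun k => (hfact k (hinv k).1 (hinv k).2.1 (hinv k).2.2).1
  have hSKT : ∀ k, S k + K k ≤ Tv k := fun k => (hfact k (hinv k).1 (hinv k).2.1 (hinv k).2.2).2.1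
  have hR1 : ∀ k, 1 ≤ R k := fun k => (hfact k (hinv k).1 (hinv k).2.1 (hinv k).2.2).2.2
  have hSs' : ∀ k, S (k+1) = S k + (R k:ℝ) * K k := by
    intro k
    show Sk a ha γ hγ (k+1) = Sk a ha γ hγ k +
      (Rk a ha γ hγ k:ℝ) * ((Pk a ha γ hγ k:ℝ) *
        (2^(nk a ha γ hγ k+1) - 2^(mk' a ha γ hγ k+1)))
    rw [Sk_succ a ha γ hγ k]; ring
  have hRK_lo : ∀ k, Tv k - S k ≤ (R k:ℝ) * K k := by
    intro k
    have h1 : (Tv k - S k) / K k ≤ (R k : ℝ) := by rw [hRceil]; exact Nat.le_ceil _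
    calc Tv k - S k = (Tv k - S k)/K k * K k := by
          rw [div_mul_cancel₀ _ (hKpos k).ne']
      _ ≤ (R k:ℝ) * K k := mul_le_mul_of_nonneg_right h1 (hKpos k).le
  have hRK_hi : ∀ k, (R k:ℝ) * K k ≤ Tv k - S k + K k := by
    intro k
    have hnn : 0 ≤ (Tv k - S k)/K k := div_nonneg (by linarith [hSKT k, hKpos k]) (hKpos k).le
    have h1 : (R k : ℝ) ≤ (Tv k - S k)/K k + 1 := by
      rw [hRceil]
      exact le_of_lt (Nat.ceil_lt_add_one hnn)
    calc (R k:ℝ) * K k ≤ ((Tv k - S k)/K k + 1) * K k :=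
          mul_le_mul_of_nonneg_right h1 (hKpos k).le
      _ = (Tv k - S k)/K k * K k + K k := by ring
      _ = Tv k - S k + K k := by rw [div_mul_cancel₀ _ (hKpos k).ne']
  -- landing bounds
  have hland_lo : ∀ k, Tv k ≤ S (k+1) := by
    intro k; rw [hSs' k]; linarith [hRK_lo k]
  have hland_hi : ∀ k, S (k+1) ≤ Tv k + K k := by
    intro k; rw [hSs' k]; linarith [hRK_hi k]
  have hKsmall : ∀ k : ℕ, ((k:ℝ)+1) * K k ≤ Tv k := by
    intro k
    have hmn := hmN k
    have hpN : (0:ℝ) < 2^(N k + 1) := by positivity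
    have hpm : (0:ℝ) < 2^(m k + 1) := by positivity
    have hPpos : (0:ℝ) < (P k : ℝ) := by exact_mod_cast (hinv k).1
    have haN : ((k:ℝ)+1) * γ * (P k + 1) ≤ a (N k) := (hspec k).2.1
    have haNpos : 0 < a (N k) := lt_of_lt_of_le (by positivity) haN
    have hccN : a (N k) ≤ cc a (m k) (N k) := cc_ge_self a hmn haNpos.le
    have hk0 : (0:ℝ) ≤ (k:ℝ) := Nat.cast_nonneg k
    rw [hK, hTv]
    simp only [Tval]
    rw [le_div_iff₀ hγ]
    have h1 : ((k:ℝ)+1) * γ * (P k + 1) ≤ cc a (m k) (N k) := le_trans haN hccN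
    have h2 : (0:ℝ) ≤ ((k:ℝ)+1)*γ := by positivity
    nlinarith [mul_le_mul_of_nonneg_right h1 hpN.le, mul_nonneg h2 hpN.le,
      mul_nonneg (mul_nonneg h2 hPpos.le) hpm.le]
  -- checkpoint structure of r
  have hmk_mono : StrictMono m := by
    apply strictMono_nat_of_lt_succ
    intro k
    have h1 := (hspec k).1
    have h2 : m (k+1) = N k := mk_succ a ha γ hγ k
    omega
  have hm1 : ∀ k, k + 1 ≤ m k := by
    intro k
    induction k with
    | zero => exact le_refl _
    | succ k ih =>
      have h2 : m k < m (k+1) := hmk_mono (by omega)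
      omega
  have hr_ck : ∀ k, r (m k) = R k := by
    intro k
    have hex : ∃ k', mk' a ha γ hγ k' = m k := ⟨k, rfl⟩
    have : r (m k) = Rk a ha γ hγ (Classical.choose hex) := by
      rw [hr]
      simp only [rr, dif_pos hex]
    rw [this]
    have hc : mk' a ha γ hγ (Classical.choose hex) = m k := Classical.choose_spec hex
    have : Classical.choose hex = k := hmk_mono.injective hc
    rw [this]
  have hr_nck : ∀ n, (∀ k, m k ≠ n) → r n = 1 := by
    intro n hn
    rw [hr]
    simp only [rr]
    rw [dif_neg]
    rintro ⟨k, hk⟩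
    exact hn k hk
  have hrpos : ∀ n, 0 < r n := by
    intro n
    by_cases hex : ∃ k, m k = n
    · obtain ⟨k, hk⟩ := hex
      rw [← hk, hr_ck k]
      exact hR1 k
    · rw [hr_nck n (fun k hk => hex ⟨k, hk⟩)]
      norm_num
  refine ⟨r, hrpos, ?_⟩
  -- products and sums
  set Q : ℕ → ℕ := fun n => ∏ i ∈ Finset.range n, r i with hQ
  set SS : ℕ → ℝ := fun n => ∑ j ∈ Finset.range n, (2:ℝ)^(j+1) * (Q (j+1) : ℝ) with hSS
  have hgoalfun : (fun n : ℕ =>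
        (((2:ℝ)^(n+1) * a n /
          ∑ j ∈ Finset.range n,
            (2:ℝ)^(j+1) * ∏ i ∈ Finset.range (j+1), (r i : ℝ) : ℝ) : EReal))
      = fun n : ℕ => (((2:ℝ)^(n+1) * a n / SS n : ℝ) : EReal) := by
    funext n
    rw [hSS]
    norm_num [hQ]
  rw [hgoalfun]
  -- structural formulas
  have hQsucc : ∀ n, Q (n+1) = Q n * r n := fun n => Finset.prod_range_succ r n
  have hQ0 : Q 0 = 1 := rfl
  have hr0 : r 0 = 1 := hr_nck 0 (fun k => by have := hm1 k; omega)
  have hQin : ∀ k, Q (m k) = P k → ∀ j, m k ≤ j → j < m (k+1) → Q (j+1) = P k * R k := by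
    intro k hQmk
    have key : ∀ j, m k ≤ j → (j < m (k+1) → Q (j+1) = P k * R k) := by
      intro j hj1
      induction j, hj1 using Nat.le_induction with
      | base => intro _; rw [hQsucc, hQmk, hr_ck k]
      | succ j hj ih =>
        intro hj2
        have hnotck : ∀ k', m k' ≠ j+1 := by
          intro k' hk'
          rcases lt_trichotomy k' (k+1) with h | h | h
          · have h2 : m k' ≤ m k := hmk_mono.monotone (by omega)
            omega
          · subst h; omega
          · have h2 : m (k+1) ≤ m k' := hmk_mono.monotone (by omega)
            omega
        rw [hQsucc, ih (by omega), hr_nck (j+1) hnotck, mul_one]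
    exact fun j h1 h2 => key j h1 h2
  have hQm : ∀ k, Q (m k) = P k := by
    intro k
    induction k with
    | zero =>
      show Q (m 0) = P 0
      have e1 : m 0 = 1 := mk_zero a ha γ hγ
      have e2 : P 0 = 1 := Pk_zero a ha γ hγ
      rw [e1, e2]
      rw [show (1:ℕ) = 0 + 1 from rfl, hQsucc, hQ0, hr0]
    | succ k ih =>
      have hmlt : m k < m (k+1) := hmk_mono (by omega)
      have h1 := hQin k ih (m (k+1) - 1) (by omega) (by omega)
      have heq : m (k+1) - 1 + 1 = m (k+1) := by omega
      rw [heq] at h1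
      rw [h1]
      exact (Pk_succ a ha γ hγ k).symm
  have hSSsucc : ∀ n, SS (n+1) = SS n + 2^(n+1) * (Q (n+1):ℝ) :=
    fun n => Finset.sum_range_succ _ n
  have hSS0 : SS 0 = 0 := rfl
  have hSSin' : ∀ k, SS (m k) = S k → ∀ n, m k + 1 ≤ n → n ≤ m (k+1) →
      SS n = S k + (R k : ℝ) * (P k) * (2^(n+1) - 2^(m k + 1)) := by
    intro k hbase n hn1
    induction n, hn1 using Nat.le_induction with
    | base =>
      intro _
      rw [hSSsucc, hbase, hQin k (hQm k) (m k) (le_refl _) (hmk_mono (by omega))]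
      push_cast
      ring
    | succ n hn ih =>
      intro hn2
      have hQn : Q (n+1) = P k * R k := hQin k (hQm k) n (by omega) (by omega)
      rw [hSSsucc, ih (by omega), hQn]
      push_cast
      ring
  have hSSm : ∀ k, SS (m k) = S k := by
    intro k
    induction k with
    | zero =>
      show SS (m 0) = S 0
      have e1 : m 0 = 1 := mk_zero a ha γ hγ
      have e2 : S 0 = 2 := Sk_zero a ha γ hγ
      rw [e1, e2, show SS 1 = SS (0 + 1) from rfl, hSSsucc, hSS0,
        hQsucc 0, hQ0, hr0]
      norm_num
    | succ k ih =>
      have hmlt : m k < m (k+1) := hmk_mono (by omega)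
      have h1 := hSSin' k ih (m (k+1)) (by omega) (le_refl _)
      have hms : m (k+1) = N k := mk_succ a ha γ hγ k
      rw [h1]
      rw [hms]
      exact (Sk_succ a ha γ hγ k).symm
  have hSSin : ∀ k n, m k < n → n ≤ m (k+1) →
      SS n = S k + (R k : ℝ) * (P k) * (2^(n+1) - 2^(m k + 1)) :=
    fun k n h1 h2 => hSSin' k (hSSm k) n (by omega) h2
  have hSSpos : ∀ n, 1 ≤ n → 0 < SS n := by
    intro n hn
    apply Finset.sum_pos
    · intro j hj
      have hQpos : 0 < Q (j+1) := Finset.prod_pos (fun i _ => hrpos i)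
      have : (0:ℝ) < (Q (j+1) : ℝ) := by exact_mod_cast hQpos
      positivity
    · exact ⟨0, Finset.mem_range.2 (by omega)⟩
  have hms_all : ∀ k, m (k+1) = N k := mk_succ a ha γ hγ
  have hm0_all : m 0 = 1 := mk_zero a ha γ hγ
  have hKk_all : ∀ k, K k = (P k:ℝ)*(2^(N k+1) - 2^(m k+1)) := fun k => rfl
  have hγTv_all : ∀ k, γ * Tv k = cc a (m k) (N k) * 2^(N k+1) := by
    intro k
    rw [hTv]
    simp only [Tval]
    field_simp
  have hccmulN : ∀ k, cc a (m k) (N k) * (2^(N k - m k) - 1)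
      = a (N k) * 2^(N k - m k) := fun k => cc_mul a (hmN k)
  clear_value m S P N R r Tv K Q SS
  -- main inequality: en-route bound
  have hbound : ∀ k n, m k < n → n ≤ m (k+1) → 2^(n+1) * a n ≤ γ * SS n := by
    intro k n h1 h2
    have hms : m (k+1) = N k := hms_all k
    have hnN : n ≤ N k := by omega
    have hSSn := hSSin k n h1 h2
    have hSSp : 0 < SS n := hSSpos n (by have := hm1 k; omega)
    rcases le_or_gt (a n) 0 with han | han
    · have hgp : (0:ℝ) < γ * SS n := by positivity
      nlinarith [pow_pos (show (0:ℝ) < 2 by norm_num) (n+1)]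
    · obtain ⟨β, hβ⟩ : ∃ b : ℝ, b = (P k:ℝ) * (2^(n+1) - 2^(m k+1)) := ⟨_, rfl⟩
      have hpm : (0:ℝ) < 2^(m k+1) := by positivity
      have hpn : (0:ℝ) < 2^(n+1) := by positivity
      have hpN : (0:ℝ) < 2^(N k+1) := by positivity
      have hPpos : (0:ℝ) < (P k:ℝ) := by exact_mod_cast (hinv k).1
      have hmono1 : (2:ℝ)^(m k+1) < 2^(n+1) := by
        apply pow_lt_pow_right₀ (by norm_num); omega
      have hmono2 : (2:ℝ)^(n+1) ≤ 2^(N k+1) := by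
        apply pow_le_pow_right₀ (by norm_num); omega
      have hKk : K k = (P k:ℝ)*(2^(N k+1) - 2^(m k+1)) := hKk_all k
      have hβpos : 0 < β := by
        rw [hβ]; exact mul_pos hPpos (by linarith)
      have hβK : β ≤ K k := by
        rw [hβ, hKk]
        exact mul_le_mul_of_nonneg_left (by linarith) hPpos.le
      have hSpos := (hinv k).2.1
      have hKp := hKpos k
      have hprod : Tv k * β ≤ SS n * K k := by
        have h4 := hRK_lo k
        have h5 : (Tv k - S k) * β ≤ ((R k:ℝ) * K k) * β :=
          mul_le_mul_of_nonneg_right h4 hβpos.le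
        have h6 : 0 ≤ S k * (K k - β) := mul_nonneg hSpos.le (by linarith)
        have e2 : (S k + (R k:ℝ)*(P k)*(2^(n+1)-2^(m k+1))) * K k
            = S k * (K k - β) + ((R k:ℝ) * K k) * β + S k * β := by rw [hβ]; ring
        have e3 : Tv k * β = (Tv k - S k) * β + S k * β := by ring
        rw [hSSn, e2, e3]
        linarith [h5, h6]
      have hcc_comp : cc a (m k) n ≤ cc a (m k) (N k) := (hspec k).2.2 n h1 hnN
      have hccn := cc_mul a h1
      have hpowsplit : (2:ℝ)^(m k+1) * 2^(n-m k) = 2^(n+1) := by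
        rw [← pow_add]; congr 1; omega
      have hccn' : cc a (m k) n * (2^(n+1) - 2^(m k+1)) = a n * 2^(n+1) := by
        have e1 : (2:ℝ)^(n+1) - 2^(m k +1) = 2^(m k+1) * (2^(n - m k) - 1) := by
          rw [mul_sub, mul_one, hpowsplit]
        rw [e1, ← hpowsplit]
        nlinarith [hccn]
      have c3 : cc a (m k) n * β = a n * 2^(n+1) * (P k:ℝ) := by
        rw [hβ, show cc a (m k) n * ((P k:ℝ) * (2^(n+1) - 2^(m k+1)))
          = (cc a (m k) n * (2^(n+1) - 2^(m k+1))) * (P k:ℝ) from by ring, hccn']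
      have c2 : cc a (m k) n * β ≤ cc a (m k) (N k) * β :=
        mul_le_mul_of_nonneg_right hcc_comp hβpos.le
      have hγTv : γ * Tv k = cc a (m k) (N k) * 2^(N k+1) := hγTv_all k
      have c1 : γ * (Tv k * β) ≤ γ * (SS n * K k) := mul_le_mul_of_nonneg_left hprod hγ.le
      have main : (2^(n+1) * a n) * K k ≤ (γ * SS n) * K k := by
        calc (2^(n+1) * a n) * K k
            ≤ a n * 2^(n+1) * ((P k:ℝ) * 2^(N k+1)) := by
              rw [hKk]
              nlinarith [mul_pos (mul_pos han hpn) (mul_pos hPpos hpm)]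
          _ = (cc a (m k) n * β) * 2^(N k+1) := by rw [c3]; ring
          _ ≤ (cc a (m k) (N k) * β) * 2^(N k+1) := mul_le_mul_of_nonneg_right c2 hpN.le
          _ = γ * (Tv k * β) := by
              rw [show γ * (Tv k * β) = γ * Tv k * β from by ring, hγTv]; ring
          _ ≤ γ * (SS n * K k) := c1
          _ = (γ * SS n) * K k := by ring
      exact le_of_mul_le_mul_right main hKp
  -- eventual bound
  have hev : ∀ n, 2 ≤ n → 2^(n+1) * a n / SS n ≤ γ := by
    intro n hn
    have hm0 : m 0 < n := by rw [hm0_all]; omega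
    have hmself : n ≤ m n := by have := hm1 n; omega
    set kk := Nat.findGreatest (fun j => m j < n) n with hkk
    have hPk : m kk < n := Nat.findGreatest_spec (P := fun j => m j < n) (Nat.zero_le n) hm0
    have hkkn : kk < n := by
      rcases Nat.lt_or_ge kk n with h | h
      · exact h
      · exfalso
        have hle : kk ≤ n := Nat.findGreatest_le n
        have : kk = n := by omega
        rw [this] at hPk
        omega
    have hnext : n ≤ m (kk+1) := by
      by_contra hcon
      push_neg at hcon
      exact Nat.findGreatest_is_greatest (P := fun j => m j < n) (n := n) (by omega) (by omega) hcon
    have hb := hbound kk n hPk hnext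
    rw [div_le_iff₀ (hSSpos n (by omega))]
    linarith
  -- subsequence bounds
  set lb : ℕ → ℝ := fun k => γ * (1-(1/2:ℝ)^(k+1)) * (((k:ℝ)+1)/((k:ℝ)+2)) with hlb
  have hsub_ub : ∀ k, 2^(m (k+1)+1) * a (m (k+1)) / SS (m (k+1)) ≤ γ := by
    intro k
    have h1 : m k < m (k+1) := hmk_mono (by omega)
    have hb := hbound k (m (k+1)) h1 (le_refl _)
    have hSp : 0 < SS (m (k+1)) := hSSpos _ (by have := hm1 (k+1); omega)
    rw [div_le_iff₀ hSp]
    linarith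
  have hsub_lb : ∀ k, lb k ≤ 2^(m (k+1)+1) * a (m (k+1)) / SS (m (k+1)) := by
    intro k
    have hms : m (k+1) = N k := hms_all k
    have hSm1 : SS (m (k+1)) = S (k+1) := hSSm (k+1)
    have hSp : 0 < SS (m (k+1)) := hSSpos _ (by have := hm1 (k+1); omega)
    rw [hSm1] at hSp
    rw [hSm1, hms]
    rw [le_div_iff₀ hSp]
    -- facts
    have hd : k + 1 ≤ N k - m k := by have := (hspec k).1; omega
    have hmn := hmN k
    have hccm := hccmulN k
    have hγTv := hγTv_all k
    have hup := hland_hi k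
    have hKs := hKsmall k
    have hlo := hland_lo k
    -- positivity of Tv
    have haN : ((k:ℝ)+1) * γ * (P k + 1) ≤ a (N k) := (hspec k).2.1
    have hPpos : (0:ℝ) < (P k:ℝ) := by exact_mod_cast (hinv k).1
    have haNpos : 0 < a (N k) := lt_of_lt_of_le (by positivity) haN
    have hccN : a (N k) ≤ cc a (m k) (N k) := cc_ge_self a hmn haNpos.le
    have hpN : (0:ℝ) < 2^(N k+1) := by positivity
    have hTvpos : 0 < Tv k := by
      have h2 : 0 < cc a (m k) (N k) * 2^(N k+1) := mul_pos (by linarith) hpN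
      nlinarith
    -- q = (1/2)^d
    obtain ⟨q, hq⟩ : ∃ q : ℝ, q = (1/2:ℝ)^(N k - m k) := ⟨_, rfl⟩
    have hq1 : q * 2^(N k - m k) = 1 := by
      rw [hq, ← mul_pow]; norm_num
    have hqpos : 0 < q := by rw [hq]; positivity
    have hqk : q ≤ (1/2:ℝ)^(k+1) := by
      rw [hq]
      exact pow_le_pow_of_le_one (by norm_num) (by norm_num) hd
    have hqlt : (1/2:ℝ)^(k+1) < 1 := by
      apply pow_lt_one₀ (by norm_num) (by norm_num)
      omega
    -- exact identity : 2^(N+1) a_N = γ Tv (1-q)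
    have heq1 : 2^(N k+1) * a (N k) = γ * Tv k * (1 - q) := by
      have e2 : (1-q) = (2^(N k - m k) - 1) * q := by
        rw [mul_comm, mul_sub, hq1, mul_one]
      have e3 : cc a (m k) (N k) * (1-q) = a (N k) := by
        calc cc a (m k) (N k) * (1-q)
            = (cc a (m k) (N k) * (2^(N k - m k) - 1)) * q := by rw [e2]; ring
          _ = (a (N k) * 2^(N k - m k)) * q := by rw [hccm]
          _ = a (N k) * (q * 2^(N k - m k)) := by ring
          _ = a (N k) := by rw [hq1]; ring
      calc (2:ℝ)^(N k+1) * a (N k)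
          = cc a (m k) (N k) * (1-q) * 2^(N k+1) := by rw [e3]; ring
        _ = (γ * Tv k) * (1-q) := by rw [hγTv]; ring
        _ = γ * Tv k * (1-q) := by ring
    -- (k+1) S(k+1) ≤ (k+2) Tv
    have hSub : ((k:ℝ)+1) * S (k+1) ≤ ((k:ℝ)+2) * Tv k := by nlinarith
    -- goal : lb k * S (k+1) ≤ 2^(N k+1) * a (N k)
    have hlbk : lb k = γ * (1-(1/2:ℝ)^(k+1)) * (((k:ℝ)+1)/((k:ℝ)+2)) := rfl
    rw [heq1, hlbk]
    have hk2 : (0:ℝ) < (k:ℝ)+2 := by positivity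
    have hk1 : (0:ℝ) < (k:ℝ)+1 := by positivity
    have hfac : (0:ℝ) ≤ γ * (1-(1/2:ℝ)^(k+1)) := by nlinarith
    have h3 : γ * (1-(1/2:ℝ)^(k+1)) * (((k:ℝ)+1) * S (k+1))
        ≤ γ * (1-(1/2:ℝ)^(k+1)) * (((k:ℝ)+2) * Tv k) := by
      exact mul_le_mul_of_nonneg_left hSub hfac
    have h4 : γ * (1-(1/2:ℝ)^(k+1)) * Tv k ≤ γ * (1 - q) * Tv k := by
      have : γ * ((1-(1/2:ℝ)^(k+1)) * Tv k) ≤ γ * ((1 - q) * Tv k) := by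
        apply mul_le_mul_of_nonneg_left _ hγ.le
        apply mul_le_mul_of_nonneg_right _ hTvpos.le
        linarith
      linarith [this]
    -- combine : lb * S = (γ(1-p)(k+1)/(k+2)) S ≤ γ(1-p)Tv ≤ γ(1-q)Tv
    have hgoal' : (γ * (1-(1/2:ℝ)^(k+1)) * (((k:ℝ)+1))) * S (k+1)
        ≤ (γ * Tv k * (1-q)) * ((k:ℝ)+2) := by
      nlinarith [h3, h4, mul_le_mul_of_nonneg_right h4 hk2.le]
    rw [show γ * (1-(1/2:ℝ)^(k+1)) * (((k:ℝ)+1)/((k:ℝ)+2)) * S (k+1)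
      = (γ * (1-(1/2:ℝ)^(k+1)) * (((k:ℝ)+1))) * S (k+1) / ((k:ℝ)+2) from by ring,
      div_le_iff₀ hk2]
    linarith [hgoal']
  have hlb_tendsto : Tendsto lb atTop (nhds γ) := by
    have t1 : Tendsto (fun k : ℕ => (1/2:ℝ)^(k+1)) atTop (nhds 0) := by
      have := tendsto_pow_atTop_nhds_zero_of_lt_one (r := (1/2:ℝ)) (by norm_num) (by norm_num)
      exact this.comp (tendsto_add_atTop_nat 1)
    have t2 : Tendsto (fun k : ℕ => ((k:ℝ)+1)/((k:ℝ)+2)) atTop (nhds 1) := by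
      have h5 : Tendsto (fun k : ℕ => ((k:ℝ)+2)) atTop atTop :=
        tendsto_atTop_add_const_right _ 2 tendsto_natCast_atTop_atTop
      have h6 : Tendsto (fun k : ℕ => ((k:ℝ)+2)⁻¹) atTop (nhds 0) := h5.inv_tendsto_atTop
      have h7 : Tendsto (fun k : ℕ => 1 - ((k:ℝ)+2)⁻¹) atTop (nhds (1 - 0)) :=
        tendsto_const_nhds.sub h6
      have heq : (fun k : ℕ => ((k:ℝ)+1)/((k:ℝ)+2)) = fun k : ℕ => 1 - ((k:ℝ)+2)⁻¹ := by
        funext k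
        have : ((k:ℝ)+2) ≠ 0 := by positivity
        field_simp
        ring
      rw [heq]
      simpa using h7
    have t3 : Tendsto (fun k : ℕ => γ * (1-(1/2:ℝ)^(k+1))) atTop (nhds (γ * (1-0))) :=
      tendsto_const_nhds.mul (tendsto_const_nhds.sub t1)
    have t4 := t3.mul t2
    rw [hlb]
    simpa using t4
  have hsub : Tendsto (fun k => 2^(m (k+1)+1) * a (m (k+1)) / SS (m (k+1))) atTop (nhds γ) :=
    tendsto_of_tendsto_of_tendsto_of_le_of_le hlb_tendsto tendsto_const_nhds hsub_lb hsub_ub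
  -- conclude
  set u : ℕ → EReal := fun n : ℕ => (((2:ℝ)^(n+1) * a n / SS n : ℝ) : EReal) with hu
  apply le_antisymm
  · apply Filter.limsup_le_of_le (by isBoundedDefault)
    filter_upwards [eventually_ge_atTop 2] with n hn
    exact EReal.coe_le_coe_iff.2 (hev n hn)
  · by_contra hcon
    push_neg at hcon
    obtain ⟨x, hx1, hx2⟩ := exists_between hcon
    have hφ : Tendsto (fun k => m (k+1)) atTop atTop := by
      have : StrictMono (fun k => m (k+1)) := fun i j h => hmk_mono (by omega)
      exact this.tendsto_atTop
    have hc : Tendsto (fun k => u (m (k+1))) atTop (nhds (γ : EReal)) := by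
      rw [hu]
      exact EReal.tendsto_coe.2 hsub
    have hev2 : ∀ᶠ k in atTop, x ≤ u (m (k+1)) :=
      hc.eventually_const_le hx2
    have hfreq : ∃ᶠ n in atTop, x ≤ u n := hφ.frequently hev2.frequently
    have : x ≤ limsup u atTop := le_limsup_of_frequently_le' hfreq
    exact absurd (lt_of_le_of_lt this hx1) (lt_irrefl _)
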